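/- Let K be a field, and let (V, (vᵢ)_{i∈ι}, w, d, F) and (V′, (v′ⱼ)_{j∈ι′}, w′, d′, F′) be two finite-dimensional weight-filtered complexes as in the context. Suppose f : V → V′, g : V′ → V, H : V → V, H′ : V′ → V′ are linear maps satisfying: f ∘ d = d′ ∘ f, g ∘ d′ = d ∘ g, g ∘ f − id_V = H ∘ d + d ∘ H, f ∘ g − id_{V′} = H′ ∘ d′ + d′ ∘ H′, and all four maps are filtered, i.e., f(F_s) ⊆ F′_s, g(F′_s) ⊆ F_s, H(F_s) ⊆ F_s, H′(F′_s) ⊆ F′_s for all s ∈ ℝ. Then for every cycle x ∈ V (d x = 0) with x ∉ range d, the element f(x) is a cycle in V′ with f(x) ∉ range d′, and Gr′(f(x)) = Gr(x). -/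

import Mathlib

/-- The `s`-th piece of the descending ℝ-filtration induced by the weight function `w`
on the basis `v`: the span of the basis vectors of weight at least `s`. -/
noncomputable def filtSub {K V : Type*} [Field K] [AddCommGroup V] [Module K V]
    {ι : Type*} (v : Module.Basis ι K V) (w : ι → ℝ) (s : ℝ) : Submodule K V :=
  Submodule.span K (Set.range fun i : {i : ι // s ≤ w i} => v i.1)

/-- The filtration grading of the homology class of a cycle `x`:
`Gr(x) = sSup {s | ∃ u, x + d u ∈ F_s}`. -/
noncomputable def filtGr {K V : Type*} [Field K] [AddCommGroup V] [Module K V]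
    {ι : Type*} (v : Module.Basis ι K V) (w : ι → ℝ) (d : V →ₗ[K] V) (x : V) : ℝ :=
  sSup {s : ℝ | ∃ u : V, x + d u ∈ filtSub v w s}

/-- A filtered chain homotopy equivalence between finite-dimensional weight-filtered
complexes preserves the filtration grading of every nonzero homology class. -/
theorem filtered_homotopy_equiv_preserves_grading
    {K : Type*} [Field K]
    {V V' : Type*} [AddCommGroup V] [Module K V] [AddCommGroup V'] [Module K V']
    {ι ι' : Type*} [Fintype ι] [Fintype ι']
    (v : Module.Basis ι K V) (v' : Module.Basis ι' K V')
    (w : ι → ℝ) (w' : ι' → ℝ)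
    (d : V →ₗ[K] V) (d' : V' →ₗ[K] V')
    (hd : d ∘ₗ d = 0) (hd' : d' ∘ₗ d' = 0)
    (hdF : ∀ s : ℝ, (filtSub v w s).map d ≤ filtSub v w s)
    (hdF' : ∀ s : ℝ, (filtSub v' w' s).map d' ≤ filtSub v' w' s)
    (f : V →ₗ[K] V') (g : V' →ₗ[K] V) (H : V →ₗ[K] V) (H' : V' →ₗ[K] V')
    (hfd : f ∘ₗ d = d' ∘ₗ f) (hgd : g ∘ₗ d' = d ∘ₗ g)
    (hgf : g ∘ₗ f - LinearMap.id = H ∘ₗ d + d ∘ₗ H)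
    (hfg : f ∘ₗ g - LinearMap.id = H' ∘ₗ d' + d' ∘ₗ H')
    (hfF : ∀ s : ℝ, (filtSub v w s).map f ≤ filtSub v' w' s)
    (hgF : ∀ s : ℝ, (filtSub v' w' s).map g ≤ filtSub v w s)
    (hHF : ∀ s : ℝ, (filtSub v w s).map H ≤ filtSub v w s)
    (hHF' : ∀ s : ℝ, (filtSub v' w' s).map H' ≤ filtSub v' w' s)
    (x : V) (hx : d x = 0) (hxr : x ∉ LinearMap.range d) :
    d' (f x) = 0 ∧ f x ∉ LinearMap.range d' ∧
      filtGr v' w' d' (f x) = filtGr v w d x := by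
  have h1 : f (d x) = d' (f x) := LinearMap.congr_fun hfd x
  rw [hx, map_zero] at h1
  have h2 : g (f x) - x = d (H x) := by
    have := LinearMap.congr_fun hgf x
    simpa [hx] using this
  have h2' : g (f x) = d (H x) + x := by rw [← h2]; abel
  refine ⟨h1.symm, ?_, ?_⟩
  · rintro ⟨u, hu⟩
    apply hxr
    refine ⟨g u - H x, ?_⟩
    have h3 : g (d' u) = d (g u) := LinearMap.congr_fun hgd u
    rw [hu] at h3
    rw [map_sub, ← h3, h2']
    abel
  · unfold filtGr
    congr 1
    ext s
    simp only [Set.mem_setOf_eq]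
    constructor
    · rintro ⟨u, hu⟩
      refine ⟨H x + g u, ?_⟩
      have := hgF s (Submodule.mem_map_of_mem hu)
      rw [map_add, show g (d' u) = d (g u) by simpa using LinearMap.congr_fun hgd u, h2'] at this
      rw [map_add, show x + (d (H x) + d (g u)) = d (H x) + x + d (g u) by abel]
      exact this
    · rintro ⟨u, hu⟩
      refine ⟨f u, ?_⟩
      have := hfF s (Submodule.mem_map_of_mem hu)
      rw [map_add, show f (d u) = d' (f u) by simpa using LinearMap.congr_fun hfd u] at this
      exact this
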